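/- If I is an admissible commutativity ideal of KQ, then I contains all nonzero squares a² of arrows in KQ, and the orthogonal ideal I⊥ is a square-free anti-commutativity ideal. If I is an admissible anti-commutativity ideal of KQ, then I contains all nonzero squares a² of arrows in KQ, and I⊥ is a square-free commutativity ideal. -/

import Mathlib

/-! Common vocabulary for partly (anti-)commutative quiver algebras. -/

open Quiver

/-- The bundled arrows of a quiver. -/
def QArr (V : Type) [Quiver.{0} V] : Type := Σ a b : V, a ⟶ b

variable {V : Type} [Quiver.{0} V]

/-- Source of a bundled arrow. -/
def QArr.src (e : QArr V) : V := e.1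

/-- Target of a bundled arrow. -/
def QArr.tgt (e : QArr V) : V := e.2.1

/-- A bundled arrow is a loop if its source equals its target. -/
def QArr.IsLoop (e : QArr V) : Prop := e.src = e.tgt

/-- A path in a quiver bundled together with its endpoints. -/
structure QPath (V : Type) [Quiver.{0} V] : Type where
  src : V
  tgt : V
  path : Quiver.Path src tgt

namespace QPath

/-- The length of a bundled path. -/
def length (p : QPath V) : ℕ := p.path.length

/-- Composition of bundled paths, defined when the endpoints match. -/
def comp (p q : QPath V) (h : p.tgt = q.src) : QPath V :=
  ⟨p.src, q.tgt, p.path.comp (q.path.cast h.symm rfl)⟩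

/-- The bundled path of length one corresponding to an arrow. -/
def ofArrow (e : QArr V) : QPath V := ⟨e.1, e.2.1, Quiver.Hom.toPath e.2.2⟩

/-- The trivial path at a vertex. -/
def triv (v : V) : QPath V := ⟨v, v, Quiver.Path.nil⟩

end QPath

/-- The list of bundled arrows of a path, in order. -/
def Quiver.Path.arrList : ∀ {a b : V}, Quiver.Path a b → List (QArr V)
  | _, _, Quiver.Path.nil => []
  | _, _, Quiver.Path.cons p e => p.arrList ++ [⟨_, _, e⟩]

/-- The list of bundled arrows of a bundled path. -/
def QPath.arrows (p : QPath V) : List (QArr V) := p.path.arrList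

/-- A quiver is connected if any two vertices are joined by a sequence of arrows,
disregarding directions. -/
def QuiverConnected (V : Type) [Quiver.{0} V] : Prop :=
  ∀ a b : V, Relation.ReflTransGen (fun x y => Nonempty (x ⟶ y) ∨ Nonempty (y ⟶ x)) a b

/-- A realization of the path algebra `KQ` of a quiver `Q` over `K`: a `K`-algebra `A`
equipped with a `K`-basis indexed by the paths of `Q`, such that multiplication of basis
elements is given by concatenation of paths (and is `0` on non-composable paths), and such
that the identity is the sum of the classes of the trivial paths. -/
structure PathAlgebraSpec (K : Type) [Field K] (V : Type) [Quiver.{0} V]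
    (A : Type) [Ring A] [Algebra K A] : Type where
  basis : Module.Basis (QPath V) K A
  basis_mul : ∀ (p q : QPath V) (h : p.tgt = q.src),
    basis p * basis q = basis (p.comp q h)
  basis_mul_zero : ∀ p q : QPath V, p.tgt ≠ q.src → basis p * basis q = 0
  basis_one : (1 : A) = ∑ᶠ v : V, basis (QPath.triv v)

variable {K A : Type} [Field K] [Ring A] [Algebra K A]

/-- The element of the path algebra corresponding to an arrow. -/
noncomputable def PathAlgebraSpec.arr (S : PathAlgebraSpec K V A) (e : QArr V) : A :=
  S.basis (QPath.ofArrow e)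

/-- A generating set for an (anti-)commutativity ideal: a set `mono` of pairs of arrows
recording the quadratic monomial generators `ab`, and a set `comm` of pairs of arrows
recording the (anti-)commutativity generators `ab ∓ ba`. -/
structure QuadGens (V : Type) [Quiver.{0} V] : Type where
  mono : Set (QArr V × QArr V)
  comm : Set (QArr V × QArr V)

/-- Minimality of a generating set: if `ab ∓ ba` is one of the (anti-)commutativity
generators, then neither `ab` nor `ba` is one of the monomial generators. -/
def QuadGens.Minimal (G : QuadGens V) : Prop :=
  ∀ p ∈ G.comm, (p.1, p.2) ∉ G.mono ∧ (p.2, p.1) ∉ G.mono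

/-- The set of generators of an (anti-)commutativity ideal determined by `G`; for `ε = 1`
the binomial generators are the commutativity relations `ab - ba`, for `ε = -1` they are
the anti-commutativity relations `ab + ba`. -/
def QuadGens.gensSet (G : QuadGens V) (S : PathAlgebraSpec K V A) (ε : K) : Set A :=
  {x | ∃ p ∈ G.mono, x = S.arr p.1 * S.arr p.2} ∪
  {x | ∃ p ∈ G.comm, x = S.arr p.1 * S.arr p.2 - ε • (S.arr p.2 * S.arr p.1)}

/-- The span of all paths of length at least `n`; this is the `n`-th power of the
arrow ideal `J` of the path algebra. -/
def PathAlgebraSpec.geSpan (S : PathAlgebraSpec K V A) (n : ℕ) : Submodule K A :=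
  Submodule.span K (S.basis '' {p | n ≤ p.length})

/-- The span of all paths of length exactly `n`: the degree-`n` homogeneous component
of the path algebra. -/
def PathAlgebraSpec.degSpan (S : PathAlgebraSpec K V A) (n : ℕ) : Submodule K A :=
  Submodule.span K (S.basis '' {p | p.length = n})

/-- An ideal `I` of the path algebra is admissible if `Jⁿ ⊆ I ⊆ J²` for some `n ≥ 2`,
where `J` is the arrow ideal. -/
def PathAlgebraSpec.IsAdmissible (S : PathAlgebraSpec K V A) (I : TwoSidedIdeal A) : Prop :=
  ∃ n : ℕ, 2 ≤ n ∧ (S.geSpan n : Set A) ⊆ (I : Set A) ∧ (I : Set A) ⊆ (S.geSpan 2 : Set A)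

/-- An ideal is square-free if it contains no nonzero square `a²` of an arrow, i.e. no
square of a loop. -/
def PathAlgebraSpec.IsSquareFree (S : PathAlgebraSpec K V A) (I : TwoSidedIdeal A) : Prop :=
  ∀ e : QArr V, e.IsLoop → S.arr e * S.arr e ∉ I

/-- The generating set of the orthogonal ideal `I⊥`: the relations `ab ± ba` obtained by
flipping the sign of the (anti-)commutativity generators of `I`, together with all quadratic
monomials `cd` with `cd ≠ 0` and `cd ≠ dc` in `KQ/I`. -/
def QuadGens.perpGens (G : QuadGens V) (S : PathAlgebraSpec K V A) (ε : K)
    (I : TwoSidedIdeal A) : Set A :=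
  {x | ∃ p ∈ G.comm, x = S.arr p.1 * S.arr p.2 + ε • (S.arr p.2 * S.arr p.1)} ∪
  {x | ∃ c d : QArr V, S.arr c * S.arr d ∉ I ∧ S.arr c * S.arr d - S.arr d * S.arr c ∉ I ∧
    x = S.arr c * S.arr d}

/-- The orthogonal ideal `I⊥` of an (anti-)commutativity ideal. -/
def QuadGens.perpIdeal (G : QuadGens V) (S : PathAlgebraSpec K V A) (ε : K)
    (I : TwoSidedIdeal A) : TwoSidedIdeal A :=
  TwoSidedIdeal.span (G.perpGens S ε I)

/-- The directed-edge relation of the generator graph `Γ_{I⊥}` of the orthogonal ideal: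
there is a directed edge `c → d` for each quadratic monomial generator `cd` of `I⊥`,
i.e. whenever `cd ≠ 0` and `cd ≠ dc` in `KQ/I`. -/
def QuadGens.perpDirEdge (S : PathAlgebraSpec K V A) (I : TwoSidedIdeal A)
    (c d : QArr V) : Prop :=
  S.arr c * S.arr d ∉ I ∧ S.arr c * S.arr d - S.arr d * S.arr c ∉ I

/-- A directed graph (given by its edge relation) contains a directed cycle. -/
def HasDirectedCycle {α : Type} (E : α → α → Prop) : Prop :=
  ∃ a : α, Relation.TransGen E a a

/- The quotient algebra `KQ/I`. -/

/-- The `K`-algebra structure on the quotient of a `K`-algebra by a ring congruence. -/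
noncomputable instance RingCon.quotientAlgebra' (c : RingCon A) : Algebra K c.Quotient where
  algebraMap :=
    { toFun k := ((algebraMap K A k : A) : c.Quotient)
      map_one' := by
        show ((algebraMap K A 1 : A) : c.Quotient) = 1
        rw [map_one, c.coe_one]
      map_mul' x y := by
        show ((algebraMap K A (x * y) : A) : c.Quotient) =
          ((algebraMap K A x : A) : c.Quotient) * ((algebraMap K A y : A) : c.Quotient)
        rw [map_mul, c.coe_mul]
      map_zero' := by
        show ((algebraMap K A 0 : A) : c.Quotient) = 0
        rw [map_zero, c.coe_zero]
      map_add' x y := by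
        show ((algebraMap K A (x + y) : A) : c.Quotient) =
          ((algebraMap K A x : A) : c.Quotient) + ((algebraMap K A y : A) : c.Quotient)
        rw [map_add, c.coe_add] }
  commutes' k x := by
    induction x using Quotient.inductionOn' with
    | h r =>
      show ((algebraMap K A k : A) : c.Quotient) * (r : c.Quotient) =
        (r : c.Quotient) * ((algebraMap K A k : A) : c.Quotient)
      rw [← c.coe_mul, ← c.coe_mul, Algebra.commutes]
  smul_def' k x := by
    induction x using Quotient.inductionOn' with
    | h r =>
      show ((k • r : A) : c.Quotient) =
        ((algebraMap K A k : A) : c.Quotient) * (r : c.Quotient)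
      rw [← c.coe_mul, Algebra.smul_def]

/-- The quotient algebra `A/I` of the path algebra by a two-sided ideal. -/
abbrev TwoSidedIdeal.Qt (I : TwoSidedIdeal A) : Type _ := I.ringCon.Quotient

/-- The quotient map `A → A/I` as a `K`-algebra homomorphism. -/
noncomputable def TwoSidedIdeal.πAlg (K : Type) [Field K] {A : Type} [Ring A] [Algebra K A]
    (I : TwoSidedIdeal A) : A →ₐ[K] I.Qt :=
  { I.ringCon.mk' with commutes' := fun _ => rfl }

/-- The degree-`n` homogeneous component of the quotient algebra `KQ/I`: the image of the
span of the paths of length `n`. -/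
noncomputable def PathAlgebraSpec.degQuot (S : PathAlgebraSpec K V A) (I : TwoSidedIdeal A)
    (n : ℕ) : Submodule K I.Qt :=
  Submodule.map (TwoSidedIdeal.πAlg K I).toLinearMap (S.degSpan n)

/-- The positively graded part `Z⁺(KQ/I) = ⊕_{i ≥ 1} Zⁱ(KQ/I)` of the center of `KQ/I`. -/
noncomputable def PathAlgebraSpec.ZPlus (S : PathAlgebraSpec K V A) (I : TwoSidedIdeal A) :
    Submodule K I.Qt :=
  ⨆ i : ℕ, (Subalgebra.toSubmodule (Subalgebra.center K I.Qt) ⊓ S.degQuot I (i + 1))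

/-- The even part `Z^ev(KQ/I) = ⊕_{k ≥ 0} Z^{2k}(KQ/I)` of the center of `KQ/I`. -/
noncomputable def PathAlgebraSpec.ZEv (S : PathAlgebraSpec K V A) (I : TwoSidedIdeal A) :
    Submodule K I.Qt :=
  ⨆ k : ℕ, (Subalgebra.toSubmodule (Subalgebra.center K I.Qt) ⊓ S.degQuot I (2 * k))

/-- A subset of an algebra (e.g. the carrier of a graded part of the center) is finitely
generated as a `K`-algebra if it coincides with the subalgebra generated by a finite subset
of itself. -/
def FinGenAsAlgebra (K : Type) [Field K] {B : Type} [Ring B] [Algebra K B]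
    (M : Set B) : Prop :=
  ∃ s : Finset B, ↑s ⊆ M ∧ M = (Algebra.adjoin K (↑s : Set B) : Set B)

/-- The subquiver `Q_x` of `Q`: its vertices are `x` together with all endpoints of arrows
incident to `x`, and its arrows are the arrows of `Q` with origin or target `x`. -/
def Nbhd (x : V) : Type :=
  {v : V // v = x ∨ ∃ e : QArr V, (e.src = x ∨ e.tgt = x) ∧ (e.src = v ∨ e.tgt = v)}

instance (x : V) : Quiver.{0} (Nbhd x) :=
  ⟨fun a b => {e : a.val ⟶ b.val // a.val = x ∨ b.val = x}⟩

/-- The inclusion of the arrows of `Q_x` into the arrows of `Q`. -/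
def Nbhd.arrToV {x : V} (E : QArr (Nbhd x)) : QArr V := ⟨E.1.val, E.2.1.val, E.2.2.val⟩

/-- The generating set of the ideal `I_x` of `KQ_x`: those generating relations of `I` all
of whose arrows lie in `Q_x`. -/
def QuadGens.restrict (G : QuadGens V) (x : V) : QuadGens (Nbhd x) where
  mono := {p | (Nbhd.arrToV p.1, Nbhd.arrToV p.2) ∈ G.mono}
  comm := {p | (Nbhd.arrToV p.1, Nbhd.arrToV p.2) ∈ G.comm}

/-- One swap of two adjacent letters (related by `R`) in a word of arrows. -/
inductive SwapStep (R : QArr V → QArr V → Prop) : List (QArr V) → List (QArr V) → Prop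
  | swap (u w : List (QArr V)) {a b : QArr V} (h : R a b) :
      SwapStep R (u ++ a :: b :: w) (u ++ b :: a :: w)

/-- `NSwap R n l m` means the word `m` is obtained from the word `l` by exactly `n`
swaps of adjacent letters related by `R`. -/
inductive NSwap (R : QArr V → QArr V → Prop) : ℕ → List (QArr V) → List (QArr V) → Prop
  | refl (l : List (QArr V)) : NSwap R 0 l l
  | step {n : ℕ} {l m k : List (QArr V)} :
      SwapStep R l k → NSwap R n k m → NSwap R (n + 1) l m

/-- The transposition `(ab)` is allowed if `ab ∉ I` and `ab ∓ ba` is one of the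
(anti-)commutativity generators. -/
def AllowedTransposition (S : PathAlgebraSpec K V A) (G : QuadGens V) (I : TwoSidedIdeal A)
    (a b : QArr V) : Prop :=
  S.arr a * S.arr b ∉ I ∧ ((a, b) ∈ G.comm ∨ (b, a) ∈ G.comm)

/-- Two paths are equivalent by exactly `n` allowed transpositions. -/
def PathEquivN (S : PathAlgebraSpec K V A) (G : QuadGens V) (I : TwoSidedIdeal A)
    (n : ℕ) (p q : QPath V) : Prop :=
  p.src = q.src ∧ p.tgt = q.tgt ∧
    NSwap (AllowedTransposition S G I) n p.arrows q.arrows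

/-- Two paths are equivalent, `p ∼ q`, if one is obtained from the other by a sequence of
allowed transpositions. -/
def PathEquiv (S : PathAlgebraSpec K V A) (G : QuadGens V) (I : TwoSidedIdeal A)
    (p q : QPath V) : Prop :=
  ∃ n : ℕ, PathEquivN S G I n p q

/-- The undirected-edge relation of the generator/relation graph: `a — b` whenever
`ab ∓ ba` is one of the (anti-)commutativity generators. -/
def UndirEdge (G : QuadGens V) (a b : QArr V) : Prop :=
  (a, b) ∈ G.comm ∨ (b, a) ∈ G.comm

/-- The directed-edge relation of the relation graph `Γ_rel`: `a → b` whenever `ab = 0`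
in `KQ/I`. -/
def RelDirEdge (S : PathAlgebraSpec K V A) (I : TwoSidedIdeal A) (a b : QArr V) : Prop :=
  S.arr a * S.arr b ∈ I

/-- A clique in the relation graph: a set of vertices pairwise joined by undirected edges. -/
def GraphClique (G : QuadGens V) (s : Set (QArr V)) : Prop :=
  ∀ a ∈ s, ∀ b ∈ s, a ≠ b → UndirEdge G a b

/-- The condition of Theorem `rel-graph`(i) on a set of vertices of the relation graph:
it is a clique of loops, and every other vertex `b` either has a directed edge from the
clique to `b` and one from `b` to the clique, or can be adjoined to the clique. -/
def CliqueCond (S : PathAlgebraSpec K V A) (G : QuadGens V) (I : TwoSidedIdeal A)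
    (s : Set (QArr V)) : Prop :=
  (∀ a ∈ s, a.IsLoop) ∧ GraphClique G s ∧
    ∀ b : QArr V, b ∉ s →
      ((∃ a ∈ s, RelDirEdge S I a b) ∧ (∃ a ∈ s, RelDirEdge S I b a)) ∨
        GraphClique G (insert b s)

open scoped Classical in
/-- The number of occurrences of an arrow in a list of arrows. -/
noncomputable def acount (l : List (QArr V)) (a : QArr V) : ℕ := l.count a


section MyAux

variable {V : Type} [Quiver.{0} V]

lemma myArrList_cast {a a' b : V} (h : a = a') (p : Quiver.Path a b) :
    (p.cast h rfl).arrList = p.arrList := by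
  subst h; rw [Quiver.Path.cast_rfl_rfl]

lemma myArrList_comp {a b c : V} (p : Quiver.Path a b) (q : Quiver.Path b c) :
    (p.comp q).arrList = p.arrList ++ q.arrList := by
  induction q with
  | nil => simp [Quiver.Path.arrList]
  | cons q e ih => simp [Quiver.Path.arrList, ih]

lemma myArrList_length {a b : V} (p : Quiver.Path a b) :
    p.arrList.length = p.length := by
  induction p with
  | nil => simp [Quiver.Path.arrList, Quiver.Path.length]
  | cons p e ih => simp [Quiver.Path.arrList, ih, Quiver.Path.length]; rfl

lemma myQPath_length_eq (p : QPath V) : p.length = p.arrows.length := by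
  rw [QPath.length, QPath.arrows, myArrList_length]

lemma myArrows_comp (p q : QPath V) (h : p.tgt = q.src) :
    (p.comp q h).arrows = p.arrows ++ q.arrows := by
  simp [QPath.comp, QPath.arrows, myArrList_comp, myArrList_cast]

lemma myArrows_triv (v : V) : (QPath.triv v).arrows = [] := by
  simp [QPath.arrows, QPath.triv, Quiver.Path.arrList]

lemma myArrows_ofArrow (e : QArr V) : (QPath.ofArrow e).arrows = [e] := by
  simp [QPath.arrows, QPath.ofArrow, Quiver.Hom.toPath, Quiver.Path.arrList]; rfl

lemma myExists_loopPath (e : QArr V) (he : e.IsLoop) (n : ℕ) :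
    ∃ p : QPath V, p.tgt = e.src ∧ p.arrows.length = n ∧ ∀ x ∈ p.arrows, x = e := by
  obtain ⟨v, w, f⟩ := e
  have hv : v = w := he
  subst hv
  induction n with
  | zero => exact ⟨QPath.triv v, rfl, by rw [myArrows_triv]; rfl,
      by intro x hx; rw [myArrows_triv] at hx; simp at hx⟩
  | succ n ih =>
    obtain ⟨p, ht, hl, ha⟩ := ih
    refine ⟨p.comp (QPath.ofArrow ⟨v, v, f⟩) ht, rfl, ?_, ?_⟩
    · erw [myArrows_comp, List.length_append, hl, myArrows_ofArrow]
      rfl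
    · intro x hx
      erw [myArrows_comp, myArrows_ofArrow] at hx
      rcases List.mem_append.1 hx with h | h
      · exact ha x h
      · exact List.mem_singleton.1 h

variable {K A : Type} [Field K] [Ring A] [Algebra K A]

/-- If `P` is closed under left/right composition, the span of the corresponding basis
elements is a two-sided ideal. -/
lemma myMul_basis_mem (S : PathAlgebraSpec K V A) (P : Set (QPath V))
    (hP : ∀ p ∈ P, ∀ (q : QPath V) (h : q.tgt = p.src), q.comp p h ∈ P)
    (x : A) {p : QPath V} (hp : p ∈ P) :
    x * S.basis p ∈ Submodule.span K (S.basis '' P) := by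
  have hx : x ∈ Submodule.span K (Set.range S.basis) := by
    rw [S.basis.span_eq]; trivial
  induction hx using Submodule.span_induction with
  | mem y hy =>
    obtain ⟨q, rfl⟩ := hy
    by_cases h : q.tgt = p.src
    · rw [S.basis_mul q p h]
      exact Submodule.subset_span ⟨_, hP p hp q h, rfl⟩
    · rw [S.basis_mul_zero q p h]
      exact zero_mem _
  | zero => rw [zero_mul]; exact zero_mem _
  | add y z _ _ hy hz => rw [add_mul]; exact add_mem hy hz
  | smul k y _ hy => rw [smul_mul_assoc]; exact Submodule.smul_mem _ _ hy

lemma myBasis_mul_mem (S : PathAlgebraSpec K V A) (P : Set (QPath V))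
    (hP : ∀ p ∈ P, ∀ (q : QPath V) (h : p.tgt = q.src), p.comp q h ∈ P)
    (x : A) {p : QPath V} (hp : p ∈ P) :
    S.basis p * x ∈ Submodule.span K (S.basis '' P) := by
  have hx : x ∈ Submodule.span K (Set.range S.basis) := by
    rw [S.basis.span_eq]; trivial
  induction hx using Submodule.span_induction with
  | mem y hy =>
    obtain ⟨q, rfl⟩ := hy
    by_cases h : p.tgt = q.src
    · rw [S.basis_mul p q h]
      exact Submodule.subset_span ⟨_, hP p hp q h, rfl⟩
    · rw [S.basis_mul_zero p q h]
      exact zero_mem _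
  | zero => rw [mul_zero]; exact zero_mem _
  | add y z _ _ hy hz => rw [mul_add]; exact add_mem hy hz
  | smul k y _ hy => rw [mul_smul_comm]; exact Submodule.smul_mem _ _ hy

lemma mySpan_subset (S : PathAlgebraSpec K V A) (P : Set (QPath V))
    (hPl : ∀ p ∈ P, ∀ (q : QPath V) (h : q.tgt = p.src), q.comp p h ∈ P)
    (hPr : ∀ p ∈ P, ∀ (q : QPath V) (h : p.tgt = q.src), p.comp q h ∈ P)
    (T : Set A) (hT : T ⊆ (Submodule.span K (S.basis '' P) : Set A)) :
    ((TwoSidedIdeal.span T : TwoSidedIdeal A) : Set A) ⊆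
      (Submodule.span K (S.basis '' P) : Set A) := by
  have hmull : ∀ (x y : A), y ∈ Submodule.span K (S.basis '' P) →
      x * y ∈ Submodule.span K (S.basis '' P) := by
    intro x y hy
    induction hy using Submodule.span_induction with
    | mem z hz =>
      obtain ⟨p, hp, rfl⟩ := hz
      exact myMul_basis_mem S P hPl x hp
    | zero => rw [mul_zero]; exact zero_mem _
    | add y z _ _ hy hz => rw [mul_add]; exact add_mem hy hz
    | smul k y _ hy => rw [mul_smul_comm]; exact Submodule.smul_mem _ _ hy
  have hmulr : ∀ (x y : A), y ∈ Submodule.span K (S.basis '' P) →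
      y * x ∈ Submodule.span K (S.basis '' P) := by
    intro x y hy
    induction hy using Submodule.span_induction with
    | mem z hz =>
      obtain ⟨p, hp, rfl⟩ := hz
      exact myBasis_mul_mem S P hPr x hp
    | zero => rw [zero_mul]; exact zero_mem _
    | add y z _ _ hy hz => rw [add_mul]; exact add_mem hy hz
    | smul k y _ hy => rw [smul_mul_assoc]; exact Submodule.smul_mem _ _ hy
  intro x hx
  exact (TwoSidedIdeal.mem_mk' (Submodule.span K (S.basis '' P) : Set A)
      (zero_mem _) (fun hx hy => add_mem hx hy) (fun hx => neg_mem hx)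
      (fun {x y} hy => hmull x y hy) (fun {x y} hx => hmulr y x hx) x).1
    (TwoSidedIdeal.mem_span_iff.1 hx _ (fun t ht =>
      (TwoSidedIdeal.mem_mk' (Submodule.span K (S.basis '' P) : Set A)
        (zero_mem _) (fun hx hy => add_mem hx hy) (fun hx => neg_mem hx)
        (fun {x y} hy => hmull x y hy) (fun {x y} hx => hmulr y x hx) t).2 (hT ht)))

lemma myArr_mul_mem (S : PathAlgebraSpec K V A) (P : Set (QPath V)) (c d : QArr V)
    (h : ∀ (hcd : c.tgt = d.src),
      (QPath.ofArrow c).comp (QPath.ofArrow d) hcd ∈ P) :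
    S.arr c * S.arr d ∈ Submodule.span K (S.basis '' P) := by
  by_cases hcd : c.tgt = d.src
  · rw [show S.arr c * S.arr d = S.basis ((QPath.ofArrow c).comp (QPath.ofArrow d) hcd)
      from S.basis_mul _ _ hcd]
    exact Submodule.subset_span ⟨_, h hcd, rfl⟩
  · have h0 : S.arr c * S.arr d = 0 :=
      S.basis_mul_zero (QPath.ofArrow c) (QPath.ofArrow d) hcd
    rw [h0]; exact zero_mem _

/-- Key vanishing lemma: if the square relation at a loop `e` is absent from the
generators, then admissibility fails. -/
lemma myLemA (S : PathAlgebraSpec K V A) (G : QuadGens V) (eps : K)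
    (I : TwoSidedIdeal A) (hI : I = TwoSidedIdeal.span (G.gensSet S eps))
    (hadm : S.IsAdmissible I) (e : QArr V) (he : e.IsLoop)
    (hmono : (e, e) ∉ G.mono)
    (hcomm : (e, e) ∈ G.comm → (1 : K) - eps = 0) : False := by
  classical
  set P : Set (QPath V) := {p | ∃ x ∈ p.arrows, x ≠ e} with hPdef
  have hPl : ∀ p ∈ P, ∀ (q : QPath V) (h : q.tgt = p.src), q.comp p h ∈ P := by
    rintro p ⟨x, hx, hxe⟩ q h
    exact ⟨x, by rw [myArrows_comp]; exact List.mem_append.2 (Or.inr hx), hxe⟩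
  have hPr : ∀ p ∈ P, ∀ (q : QPath V) (h : p.tgt = q.src), p.comp q h ∈ P := by
    rintro p ⟨x, hx, hxe⟩ q h
    exact ⟨x, by rw [myArrows_comp]; exact List.mem_append.2 (Or.inl hx), hxe⟩
  have harr : ∀ c d : QArr V, ¬(c = e ∧ d = e) →
      S.arr c * S.arr d ∈ Submodule.span K (S.basis '' P) := by
    intro c d hne
    apply myArr_mul_mem
    intro hcd
    rw [hPdef]
    rcases not_and_or.1 hne with h | h
    · exact ⟨c, by erw [myArrows_comp, myArrows_ofArrow, myArrows_ofArrow]; simp, h⟩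
    · exact ⟨d, by erw [myArrows_comp, myArrows_ofArrow, myArrows_ofArrow]; simp, h⟩
  have hgens : G.gensSet S eps ⊆ (Submodule.span K (S.basis '' P) : Set A) := by
    rintro x (⟨q, hm, rfl⟩ | ⟨q, hc, rfl⟩)
    · apply harr
      intro hpa
      have hq : q = (e, e) := Prod.ext hpa.1 hpa.2
      rw [hq] at hm
      exact hmono hm
    · by_cases hcd : q.1 = e ∧ q.2 = e
      · have hq : q = (e, e) := Prod.ext hcd.1 hcd.2
        rw [hcd.1, hcd.2]
        rw [hq] at hc
        have heq : S.arr e * S.arr e - eps • (S.arr e * S.arr e)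
            = ((1 : K) - eps) • (S.arr e * S.arr e) := by
          rw [sub_smul, one_smul]
        rw [heq, hcomm hc, zero_smul]
        exact zero_mem _
      · exact sub_mem (harr q.1 q.2 hcd)
          (Submodule.smul_mem _ _ (harr q.2 q.1 (fun h => hcd ⟨h.2, h.1⟩)))
  have hIN : (I : Set A) ⊆ (Submodule.span K (S.basis '' P) : Set A) := by
    rw [hI]
    exact mySpan_subset S P hPl hPr _ hgens
  obtain ⟨n, _, hge, _⟩ := hadm
  obtain ⟨p, _, hpl, hpa⟩ := myExists_loopPath e he n
  have hpI : S.basis p ∈ I := hge (Submodule.subset_span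
    ⟨p, by rw [Set.mem_setOf_eq, myQPath_length_eq, hpl], rfl⟩)
  have hpN : S.basis p ∈ Submodule.span K (S.basis '' P) := hIN hpI
  have hpP : p ∉ P := by
    rintro ⟨x, hx, hxe⟩
    exact hxe (hpa x hx)
  exact S.basis.linearIndependent.notMem_span_image hpP hpN

end MyAux

/-- If `I` is an admissible commutativity (resp. anti-commutativity)
ideal, then `I` contains all nonzero squares of arrows, and the orthogonal ideal `I⊥` is a
square-free anti-commutativity (resp. commutativity) ideal. -/
theorem stmt_18 {V : Type} [Quiver.{0} V] [Finite V] [Finite (QArr V)]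
    {K : Type} [Field K] [IsAlgClosed K]
    {A : Type} [Ring A] [Algebra K A]
    (hconn : QuiverConnected V)
    (S : PathAlgebraSpec K V A)
    (G : QuadGens V) (hmin : G.Minimal)
    (eps : K) (heps : eps = 1 ∨ eps = -1)
    (I : TwoSidedIdeal A) (hI : I = TwoSidedIdeal.span (G.gensSet S eps))
    (hadm : S.IsAdmissible I) :
    (∀ e : QArr V, e.IsLoop → S.arr e * S.arr e ∈ I) ∧
    (∃ G' : QuadGens V, G.perpIdeal S eps I = TwoSidedIdeal.span (G'.gensSet S (-eps))) ∧
    S.IsSquareFree (G.perpIdeal S eps I) := by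
  classical
  -- Part 1: squares of loops lie in I
  have part1 : ∀ e : QArr V, e.IsLoop → S.arr e * S.arr e ∈ I := by
    intro e he
    by_cases hm : (e, e) ∈ G.mono
    · rw [hI]
      exact TwoSidedIdeal.subset_span (Or.inl ⟨(e, e), hm, rfl⟩)
    by_cases hc : (e, e) ∈ G.comm
    · by_cases heps1 : (1 : K) - eps = 0
      · exact absurd (myLemA S G eps I hI hadm e he hm (fun _ => heps1)) (fun h => h)
      · have hg : S.arr e * S.arr e - eps • (S.arr e * S.arr e) ∈ I := by
          rw [hI]
          exact TwoSidedIdeal.subset_span (Or.inr ⟨(e, e), hc, rfl⟩)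
        have hg' : ((1 : K) - eps) • (S.arr e * S.arr e) ∈ I := by
          rwa [sub_smul, one_smul]
        have : ((1 : K) - eps)⁻¹ • (((1 : K) - eps) • (S.arr e * S.arr e)) ∈ I := by
          rw [Algebra.smul_def]
          exact I.mul_mem_left _ _ hg'
        rwa [inv_smul_smul₀ heps1] at this
    · exact absurd (myLemA S G eps I hI hadm e he hm (fun h => absurd h hc)) (fun h => h)
  refine ⟨part1, ?_, ?_⟩
  -- Part 2: the orthogonal ideal is an (anti-)commutativity ideal
  · refine ⟨⟨{p : QArr V × QArr V | S.arr p.1 * S.arr p.2 ∉ I ∧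
      S.arr p.1 * S.arr p.2 - S.arr p.2 * S.arr p.1 ∉ I}, G.comm⟩, ?_⟩
    rw [QuadGens.perpIdeal]
    congr 1
    ext x
    constructor
    · rintro (⟨⟨c, d⟩, hc, rfl⟩ | ⟨c, d, h1, h2, rfl⟩)
      · refine Or.inr ⟨(c, d), hc, ?_⟩
        rw [neg_smul, sub_neg_eq_add]
      · exact Or.inl ⟨(c, d), ⟨h1, h2⟩, rfl⟩
    · rintro (⟨⟨c, d⟩, ⟨h1, h2⟩, rfl⟩ | ⟨⟨c, d⟩, hc, rfl⟩)
      · exact Or.inr ⟨c, d, h1, h2, rfl⟩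
      · refine Or.inl ⟨(c, d), hc, ?_⟩
        rw [neg_smul, sub_neg_eq_add]
  -- Part 3: the orthogonal ideal is square-free
  · intro e he
    set P : Set (QPath V) := {p | 2 ≤ p.arrows.length ∧ p.arrows ≠ [e, e]} with hPdef
    have hPl : ∀ p ∈ P, ∀ (q : QPath V) (h : q.tgt = p.src), q.comp p h ∈ P := by
      rintro p ⟨hlen, hne⟩ q h
      rw [hPdef, Set.mem_setOf_eq, myArrows_comp, List.length_append]
      constructor
      · omega
      · intro hcontra
        have hl := congrArg List.length hcontra
        rw [List.length_append] at hl
        simp only [List.length_cons, List.length_nil] at hl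
        have hq0 : q.arrows.length = 0 := by omega
        rw [List.length_eq_zero_iff.1 hq0, List.nil_append] at hcontra
        exact hne hcontra
    have hPr : ∀ p ∈ P, ∀ (q : QPath V) (h : p.tgt = q.src), p.comp q h ∈ P := by
      rintro p ⟨hlen, hne⟩ q h
      rw [hPdef, Set.mem_setOf_eq, myArrows_comp, List.length_append]
      constructor
      · omega
      · intro hcontra
        have hl := congrArg List.length hcontra
        rw [List.length_append] at hl
        simp only [List.length_cons, List.length_nil] at hl
        have hq0 : q.arrows.length = 0 := by omega
        rw [List.length_eq_zero_iff.1 hq0, List.append_nil] at hcontra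
        exact hne hcontra
    have harr : ∀ c d : QArr V, ¬(c = e ∧ d = e) →
        S.arr c * S.arr d ∈ Submodule.span K (S.basis '' P) := by
      intro c d hne
      apply myArr_mul_mem
      intro hcd
      rw [hPdef, Set.mem_setOf_eq]; erw [myArrows_comp, myArrows_ofArrow, myArrows_ofArrow]
      constructor
      · simp
      · intro hcontra
        simp only [List.cons_append, List.nil_append, List.cons.injEq, and_true] at hcontra
        exact hne hcontra
    have hgens : G.perpGens S eps I ⊆ (Submodule.span K (S.basis '' P) : Set A) := by
      rintro x (⟨q, hc, rfl⟩ | ⟨c, d, h1, h2, rfl⟩)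
      · by_cases hcd : q.1 = e ∧ q.2 = e
        · have hq : q = (e, e) := Prod.ext hcd.1 hcd.2
          rw [hcd.1, hcd.2]
          rw [hq] at hc
          rcases heps with heps | heps
          · exact absurd (myLemA S G eps I hI hadm e he
              ((hmin (e, e) hc).1) (fun _ => by rw [heps, sub_self])) (fun h => h)
          · rw [heps, neg_smul, one_smul, add_neg_cancel]
            exact zero_mem _
        · exact add_mem (harr q.1 q.2 hcd)
            (Submodule.smul_mem _ _ (harr q.2 q.1 (fun h => hcd ⟨h.2, h.1⟩)))
      · apply harr
        intro hpa
        rw [hpa.1, hpa.2] at h1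
        exact h1 (part1 e he)
    have hIN : ((G.perpIdeal S eps I : TwoSidedIdeal A) : Set A) ⊆
        (Submodule.span K (S.basis '' P) : Set A) := by
      rw [QuadGens.perpIdeal]
      exact mySpan_subset S P hPl hPr _ hgens
    intro hmem
    have hee : e.tgt = e.src := he.symm
    have hx : S.arr e * S.arr e
        = S.basis ((QPath.ofArrow e).comp (QPath.ofArrow e) hee) := S.basis_mul _ _ hee
    have hN : S.basis ((QPath.ofArrow e).comp (QPath.ofArrow e) hee) ∈
        Submodule.span K (S.basis '' P) := by
      rw [← hx]
      exact hIN hmem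
    have hpP : ((QPath.ofArrow e).comp (QPath.ofArrow e) hee) ∉ P := by
      rintro ⟨-, hne⟩
      apply hne
      erw [myArrows_comp, myArrows_ofArrow]
      rfl
    exact S.basis.linearIndependent.notMem_span_image hpP hN
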